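/- Let B = [b_{ij}] be an n×n real constant row-sum matrix with Be = λ_t e. Then τ_1(B) = (1/2) · max_{1≤i,j≤n} Σ_{k=1}^{n} |b_{ik} − b_{jk}|, and this quantity also equals λ_t − min_{1≤i,j≤n} Σ_{k=1}^{n} min{b_{ik}, b_{jk}}. -/

import Mathlib

open Matrix
open scoped ENNReal

/-- Non-increasing (descending) sort of a list of reals. -/
noncomputable def sortDesc (l : List ℝ) : List ℝ := (l.insertionSort (· ≤ ·)).reverse

/-- Given the descending rearrangement `l` of `n` numbers, the sum of the largest
(about) half minus the sum of the smallest (about) half, skipping the middle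
element when `n` is odd. -/
noncomputable def halfSumDiff (n : ℕ) (l : List ℝ) : ℝ :=
  if n % 2 = 1 then (l.take ((n - 1) / 2)).sum - (l.drop ((n + 1) / 2)).sum
  else (l.take (n / 2)).sum - (l.drop (n / 2)).sum

/-- Radius of the `i`-th Gershgorin disc of the second type of `M`, computed from
the `i`-th row of `M` with the diagonal entry replaced by `0`. -/
noncomputable def secondTypeRadius {n : ℕ} (M : Matrix (Fin n) (Fin n) ℝ) (i : Fin n) : ℝ :=
  halfSumDiff n (sortDesc (List.ofFn fun j : Fin n => if j = i then 0 else M i j))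

/-- The `i`-th Gershgorin disc of the second type of `M`. -/
noncomputable def secondTypeDisc {n : ℕ} (M : Matrix (Fin n) (Fin n) ℝ) (i : Fin n) : Set ℂ :=
  Metric.closedBall ((M i i : ℝ) : ℂ) (secondTypeRadius M i)

/-- The Gershgorin region of the second type of `M`. -/
noncomputable def secondTypeRegion {n : ℕ} (M : Matrix (Fin n) (Fin n) ℝ) : Set ℂ :=
  ⋃ i : Fin n, secondTypeDisc M i

/-- `μ` is a (complex) eigenvalue of the real matrix `A`, i.e. a complex root of
its characteristic polynomial. -/
def IsEigenvalueC {n : ℕ} (A : Matrix (Fin n) (Fin n) ℝ) (μ : ℂ) : Prop :=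
  ((A.map ((↑) : ℝ → ℂ)).charpoly).IsRoot μ

/-- The `k`-th largest element (1-indexed) among the `n - 1` off-diagonal entries of
column `j` of `B`. -/
noncomputable def kthLargestOffDiag {n : ℕ} (B : Matrix (Fin n) (Fin n) ℝ) (j : Fin n)
    (k : ℕ) : ℝ :=
  (sortDesc (((List.ofFn fun i : Fin n => B i j).eraseIdx j.val))).getD (k - 1) 0

/-- The ℓ_p norm of a vector in ℝ^n. -/
noncomputable def lpNorm {n : ℕ} (p : ℝ≥0∞) (x : Fin n → ℝ) : ℝ :=
  @norm (PiLp p fun _ : Fin n => ℝ) _ ((WithLp.equiv p (∀ _ : Fin n, ℝ)).symm x)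

/-- The seminorm-like quantity `τ_p(B)`: the supremum of `‖Bᵀ x‖_p` over all real
vectors `x` with `xᵀ e = 0` and `‖x‖_p = 1`. -/
noncomputable def tau {n : ℕ} (p : ℝ≥0∞) (B : Matrix (Fin n) (Fin n) ℝ) : ℝ :=
  sSup { t : ℝ | ∃ x : Fin n → ℝ, (∑ i, x i) = 0 ∧ lpNorm p x = 1 ∧ t = lpNorm p (Bᵀ *ᵥ x) }

/-- The Ostrowski–Brauer set `Γ(M)` of a real square matrix `M`. -/
noncomputable def brauerSet {n : ℕ} (M : Matrix (Fin n) (Fin n) ℝ) : Set ℂ :=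
  ⋃ (i : Fin n) (j : Fin n) (_ : i < j),
    { y : ℂ | ‖y - (M i i : ℝ)‖ * ‖y - (M j j : ℝ)‖ ≤
        (∑ k ∈ Finset.univ.filter fun k => k ≠ i, |M i k|) *
        (∑ k ∈ Finset.univ.filter fun k => k ≠ j, |M j k|) }

/-- `cs_j(A)` from Definition 2.3: sorted column sums difference. -/
noncomputable def csCol {n : ℕ} (A : Matrix (Fin n) (Fin n) ℝ) (j : Fin n) : ℝ :=
  halfSumDiff n (sortDesc (List.ofFn fun i : Fin n => A i j))

lemma lpNorm_one_eq {n : ℕ} (x : Fin n → ℝ) : lpNorm 1 x = ∑ i, |x i| := by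
  rw [lpNorm, PiLp.norm_eq_sum (by norm_num : 0 < (1:ℝ≥0∞).toReal)]
  simp [Real.rpow_one]


/-- explicit formula for `τ_1` of a constant row-sum matrix `B` with
`B e = λ_t e`. -/
theorem stmt17 {n : ℕ} (hn : 0 < n) (B : Matrix (Fin n) (Fin n) ℝ)
    (lamt : ℝ) (hB : B *ᵥ (1 : Fin n → ℝ) = lamt • (1 : Fin n → ℝ)) :
    tau 1 B = (1 / 2) *
        Finset.univ.sup' ⟨((⟨0, hn⟩ : Fin n), (⟨0, hn⟩ : Fin n)), Finset.mem_univ _⟩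
          (fun ij : Fin n × Fin n => ∑ k, |B ij.1 k - B ij.2 k|) ∧
      tau 1 B = lamt -
        Finset.univ.inf' ⟨((⟨0, hn⟩ : Fin n), (⟨0, hn⟩ : Fin n)), Finset.mem_univ _⟩
          (fun ij : Fin n × Fin n => ∑ k, min (B ij.1 k) (B ij.2 k)) := by
  have hne : (Finset.univ : Finset (Fin n × Fin n)).Nonempty :=
    ⟨((⟨0, hn⟩ : Fin n), (⟨0, hn⟩ : Fin n)), Finset.mem_univ _⟩
  set f : Fin n × Fin n → ℝ := fun ij => ∑ k, |B ij.1 k - B ij.2 k| with hf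
  set g : Fin n × Fin n → ℝ := fun ij => ∑ k, min (B ij.1 k) (B ij.2 k) with hg
  have hrow : ∀ i, ∑ k, B i k = lamt := by
    intro i
    have := congrFun hB i
    simpa [Matrix.mulVec, dotProduct] using this
  have hfg : ∀ ij : Fin n × Fin n, f ij = 2 * lamt - 2 * g ij := by
    intro ij
    have habs : ∀ k, |B ij.1 k - B ij.2 k|
        = B ij.1 k + B ij.2 k - 2 * min (B ij.1 k) (B ij.2 k) := by
      intro k
      rcases le_total (B ij.1 k) (B ij.2 k) with h | h
      · rw [min_eq_left h, abs_of_nonpos (by linarith)]; ring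
      · rw [min_eq_right h, abs_of_nonneg (by linarith)]; ring
    simp only [hf, hg, habs]
    rw [Finset.sum_sub_distrib, Finset.sum_add_distrib, hrow, hrow, ← Finset.mul_sum]
    ring
  set M : ℝ := Finset.univ.sup' hne f with hM
  -- transpose matrix-vector product
  have hmv : ∀ (x : Fin n → ℝ) (k : Fin n), (Bᵀ *ᵥ x) k = ∑ i, x i * B i k := by
    intro x k
    simp [Matrix.mulVec, dotProduct, Matrix.transpose_apply, mul_comm]
  -- upper bound: every element of the set is ≤ M/2
  have hub : ∀ t ∈ { t : ℝ | ∃ x : Fin n → ℝ, (∑ i, x i) = 0 ∧ lpNorm 1 x = 1 ∧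
      t = lpNorm 1 (Bᵀ *ᵥ x) }, t ≤ (1/2) * M := by
    rintro t ⟨x, hsum, hnorm, rfl⟩
    rw [lpNorm_one_eq] at hnorm ⊢
    set p : Fin n → ℝ := fun i => max (x i) 0 with hp'
    set q : Fin n → ℝ := fun i => max (-(x i)) 0 with hq'
    have hp : ∀ i, 0 ≤ p i := fun i => le_max_right _ _
    have hq : ∀ i, 0 ≤ q i := fun i => le_max_right _ _
    have hpq : ∀ i, p i - q i = x i := fun i => max_zero_sub_max_neg_zero_eq_self (x i)
    have hpqa : ∀ i, p i + q i = |x i| := fun i => max_zero_add_max_neg_zero_eq_abs_self (x i)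
    have hps : ∑ i, p i = 1/2 := by
      have h1 : ∑ i, (p i - q i) = 0 := by
        rw [show (fun i => p i - q i) = x from funext hpq] at *
        exact hsum
      have h2 : ∑ i, (p i + q i) = 1 := by
        rw [show (fun i => p i + q i) = fun i => |x i| from funext hpqa]
        exact hnorm
      rw [Finset.sum_sub_distrib] at h1
      rw [Finset.sum_add_distrib] at h2
      linarith
    have hqs : ∑ i, q i = 1/2 := by
      have h1 : ∑ i, (p i - q i) = 0 := by
        rw [show (fun i => p i - q i) = x from funext hpq]; exact hsum
      have h2 : ∑ i, (p i + q i) = 1 := by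
        rw [show (fun i => p i + q i) = fun i => |x i| from funext hpqa]; exact hnorm
      rw [Finset.sum_sub_distrib] at h1
      rw [Finset.sum_add_distrib] at h2
      linarith
    have key : ∀ k, (Bᵀ *ᵥ x) k = ∑ i, ∑ j, 2 * p i * q j * (B i k - B j k) := by
      intro k
      have hA : (∑ i, p i * B i k) * (∑ j, q j) = ∑ i, ∑ j, (p i * B i k) * q j :=
        Finset.sum_mul_sum _ _ _ _
      have hC : (∑ i, p i) * (∑ j, q j * B j k) = ∑ i, ∑ j, p i * (q j * B j k) :=
        Finset.sum_mul_sum _ _ _ _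
      have lhs : (Bᵀ *ᵥ x) k
          = 2 * ((∑ i, p i * B i k) * (∑ j, q j)) - 2 * ((∑ i, p i) * (∑ j, q j * B j k)) := by
        rw [hps, hqs, hmv x k]
        rw [show ∑ i, x i * B i k = ∑ i, (p i * B i k - q i * B i k) from
          Finset.sum_congr rfl fun i _ => by rw [← hpq i]; ring]
        rw [Finset.sum_sub_distrib]; ring
      rw [lhs, hA, hC, Finset.mul_sum, Finset.mul_sum, ← Finset.sum_sub_distrib]
      apply Finset.sum_congr rfl; intro i _
      rw [Finset.mul_sum, Finset.mul_sum, ← Finset.sum_sub_distrib]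
      apply Finset.sum_congr rfl; intro j _; ring
    have h2pq : ∀ i j, 0 ≤ 2 * p i * q j := fun i j =>
      mul_nonneg (mul_nonneg (by norm_num) (hp i)) (hq j)
    have step1 : ∑ k, |(Bᵀ *ᵥ x) k| ≤ ∑ k, ∑ i, ∑ j, 2 * p i * q j * |B i k - B j k| := by
      apply Finset.sum_le_sum; intro k _
      rw [key k]
      calc |∑ i, ∑ j, 2 * p i * q j * (B i k - B j k)|
          ≤ ∑ i, |∑ j, 2 * p i * q j * (B i k - B j k)| := Finset.abs_sum_le_sum_abs _ _
        _ ≤ ∑ i, ∑ j, 2 * p i * q j * |B i k - B j k| := by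
            apply Finset.sum_le_sum; intro i _
            calc |∑ j, 2 * p i * q j * (B i k - B j k)|
                ≤ ∑ j, |2 * p i * q j * (B i k - B j k)| := Finset.abs_sum_le_sum_abs _ _
              _ = ∑ j, 2 * p i * q j * |B i k - B j k| := by
                  apply Finset.sum_congr rfl; intro j _
                  rw [abs_mul, abs_of_nonneg (h2pq i j)]
    have step2 : ∑ k, ∑ i, ∑ j, 2 * p i * q j * |B i k - B j k|
        = ∑ i, ∑ j, 2 * p i * q j * f (i, j) := by
      rw [Finset.sum_comm]
      apply Finset.sum_congr rfl; intro i _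
      rw [Finset.sum_comm]
      apply Finset.sum_congr rfl; intro j _
      rw [← Finset.mul_sum]
    have step3 : ∑ i, ∑ j, 2 * p i * q j * f (i, j) ≤ ∑ i, ∑ j, 2 * p i * q j * M := by
      apply Finset.sum_le_sum; intro i _
      apply Finset.sum_le_sum; intro j _
      exact mul_le_mul_of_nonneg_left (Finset.le_sup' f (Finset.mem_univ (i, j))) (h2pq i j)
    have step4 : ∑ i, ∑ j, 2 * p i * q j * M = (1/2) * M := by
      have : ∑ i, ∑ j, 2 * p i * q j * M
          = 2 * M * ((∑ i, p i) * (∑ j, q j)) := by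
        rw [Finset.sum_mul_sum, Finset.mul_sum]
        apply Finset.sum_congr rfl; intro i _
        rw [Finset.mul_sum]
        apply Finset.sum_congr rfl; intro j _; ring
      rw [this, hps, hqs]; ring
    linarith [step1, step2 ▸ step1, step3, step4]
  -- main equality
  have main : tau 1 B = (1/2) * M := by
    rcases lt_or_ge n 2 with h2 | h2
    · have hn1 : n = 1 := by omega
      subst hn1
      have hSempty : { t : ℝ | ∃ x : Fin 1 → ℝ, (∑ i, x i) = 0 ∧ lpNorm 1 x = 1 ∧
          t = lpNorm 1 (Bᵀ *ᵥ x) } = ∅ := by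
        ext t
        simp only [Set.mem_setOf_eq, Set.mem_empty_iff_false, iff_false]
        rintro ⟨x, hsum, hnorm, -⟩
        rw [lpNorm_one_eq] at hnorm
        rw [Fin.sum_univ_one] at hsum
        rw [Fin.sum_univ_one, hsum] at hnorm
        norm_num at hnorm
      have hM0 : M = 0 := by
        have hz : ∀ ij : Fin 1 × Fin 1, f ij = 0 := by
          intro ij
          have : ij.1 = ij.2 := Subsingleton.elim _ _
          simp [hf, this]
        refine le_antisymm (Finset.sup'_le _ _ fun ij _ => (hz ij).le) ?_
        rw [hM]
        exact (hz ((0 : Fin 1), (0 : Fin 1))) ▸ Finset.le_sup' f (Finset.mem_univ _)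
      unfold tau; rw [hSempty, Real.sSup_empty, hM0]; ring
    · -- n ≥ 2 : find i₀ ≠ j₀ achieving the sup
      obtain ⟨ij, -, hij⟩ := Finset.exists_mem_eq_sup' hne f
      have hfnn : ∀ pq : Fin n × Fin n, 0 ≤ f pq := fun pq =>
        Finset.sum_nonneg fun k _ => abs_nonneg _
      have hMnn : 0 ≤ M := by rw [hM, hij]; exact hfnn ij
      obtain ⟨i₀, j₀, hij0, hfM⟩ : ∃ i₀ j₀ : Fin n, i₀ ≠ j₀ ∧ f (i₀, j₀) = M := by
        by_cases hd : ij.1 = ij.2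
        · have hM0 : M = 0 := by rw [hM, hij]; simp [hf, hd]
          refine ⟨⟨0, by omega⟩, ⟨1, by omega⟩, by simp [Fin.ext_iff], ?_⟩
          exact le_antisymm (Finset.le_sup' f (Finset.mem_univ _)) (hM0.le.trans (hfnn _))
        · exact ⟨ij.1, ij.2, hd, by rw [← hij]⟩
      set x : Fin n → ℝ := fun k =>
        (if k = i₀ then (1:ℝ)/2 else 0) + (if k = j₀ then -(1/2) else 0) with hx
      have hxsum : ∑ k, x k = 0 := by
        rw [hx]
        rw [Finset.sum_add_distrib]
        simp [Finset.sum_ite_eq']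
      have hxabs : ∀ k, |x k| = (if k = i₀ then (1:ℝ)/2 else 0) + (if k = j₀ then 1/2 else 0) := by
        intro k
        simp only [hx]
        by_cases h1 : k = i₀
        · have h2 : ¬ k = j₀ := fun h => hij0 (h1.symm.trans h)
          norm_num [h1, h2, hij0, hij0.symm]
        · by_cases h2 : k = j₀
          · norm_num [h1, h2, hij0, hij0.symm]
          · norm_num [h1, h2]
      have hxnorm : lpNorm 1 x = 1 := by
        rw [lpNorm_one_eq]
        simp only [hxabs]
        rw [Finset.sum_add_distrib]
        simp [Finset.sum_ite_eq']
        norm_num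
      have hmvx : ∀ k, (Bᵀ *ᵥ x) k = (1/2) * (B i₀ k - B j₀ k) := by
        intro k
        rw [hmv x k]
        simp only [hx, add_mul, ite_mul, zero_mul, neg_mul]
        rw [Finset.sum_add_distrib]
        simp [Finset.sum_ite_eq']
        ring
      have hval : lpNorm 1 (Bᵀ *ᵥ x) = (1/2) * M := by
        rw [lpNorm_one_eq]
        simp only [hmvx]
        rw [← hfM]
        simp only [hf]
        rw [Finset.mul_sum]
        apply Finset.sum_congr rfl; intro k _
        rw [abs_mul, abs_of_nonneg (by norm_num : (0:ℝ) ≤ 1/2)]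
      have hmem : (1/2) * M ∈ { t : ℝ | ∃ x : Fin n → ℝ, (∑ i, x i) = 0 ∧ lpNorm 1 x = 1 ∧
          t = lpNorm 1 (Bᵀ *ᵥ x) } := ⟨x, hxsum, hxnorm, hval.symm⟩
      unfold tau
      exact le_antisymm (Real.sSup_le hub (by linarith)) (le_csSup ⟨(1/2) * M, hub⟩ hmem)
  constructor
  · exact main
  · rw [main]
    have h1 : M = 2 * lamt - 2 * Finset.univ.inf' hne g := by
      apply le_antisymm
      · apply Finset.sup'_le
        intro ij _
        rw [hfg ij]
        have := Finset.inf'_le g (Finset.mem_univ ij)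
        linarith
      · obtain ⟨ij, -, hij⟩ := Finset.exists_mem_eq_inf' hne g
        have h := Finset.le_sup' f (Finset.mem_univ ij)
        rw [hfg ij] at h
        rw [hij]
        exact h
    rw [h1]; ring
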